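/- If A ∈ ℝ^{n×n} is a symmetric circulant matrix with first column a, then the cell-centered Hartley matrix diagonalizes A: H(n)ᵀ·A·H(n) = n·Λ, where Λ = √n·Diag(Ȟ_c·a). -/

import Mathlib

open Matrix Real

/-- The cell-centered Hartley matrix `H(n)` with entries
`H(n)_{j,k} = cos(2(j+1/2)kπ/n) + sin(2(j+1/2)kπ/n)`. -/
noncomputable def hartley (n : ℕ) : Matrix (Fin n) (Fin n) ℝ :=
  fun j k =>
    Real.cos (2 * ((j.val : ℝ) + 1/2) * (k.val : ℝ) * Real.pi / n) +
    Real.sin (2 * ((j.val : ℝ) + 1/2) * (k.val : ℝ) * Real.pi / n)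

/-- The node-centered cosine matrix `(Ȟ_c)_{j,k} = n^{−1/2}·cos(2jkπ/n)`. -/
noncomputable def Hc (n : ℕ) : Matrix (Fin n) (Fin n) ℝ :=
  fun j k => Real.cos (2 * (j.val : ℝ) * (k.val : ℝ) * Real.pi / n) / Real.sqrt n

namespace SCDH

/-- Periodic generator of the Hartley matrix columns. -/
noncomputable def g (n k : ℕ) (t : ℤ) : ℝ :=
  Real.cos ((2*t+1) * k * Real.pi / n) + Real.sin ((2*t+1) * k * Real.pi / n)

/-- The eigenvalues. -/
noncomputable def lam (n : ℕ) (a : Fin n → ℝ) (k : Fin n) : ℝ :=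
  ∑ m : Fin n, a m * Real.cos (2 * ((m.val : ℤ) : ℝ) * (k.val : ℝ) * Real.pi / n)

lemma g_periodic (n k : ℕ) [NeZero n] {t s : ℤ} (h : t ≡ s [ZMOD n]) :
    g n k t = g n k s := by
  have hd : (n:ℤ) ∣ t - s := Int.ModEq.dvd h.symm
  obtain ⟨q, hq⟩ := hd
  have ht : t = s + n * q := by linarith
  have hn : (n:ℝ) ≠ 0 := Nat.cast_ne_zero.mpr (NeZero.ne n)
  have harg : ((2*t+1) * k * Real.pi / n : ℝ) =
      (2*s+1) * k * Real.pi / n + ((q*k : ℤ) : ℝ) * (2 * Real.pi) := by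
    subst ht; push_cast; field_simp; ring
  unfold g
  rw [harg, Real.cos_add_int_mul_two_pi, Real.sin_add_int_mul_two_pi]

lemma g_addsub (n k : ℕ) (t s : ℤ) :
    g n k (t - s) + g n k (t + s) =
      2 * Real.cos (2 * s * k * Real.pi / n) * g n k t := by
  unfold g
  have h1 : ((2*(t-s)+1) * k * Real.pi / n : ℝ) =
      (2*t+1) * k * Real.pi / n - 2 * s * k * Real.pi / n := by ring
  have h2 : ((2*(t+s)+1) * k * Real.pi / n : ℝ) =
      (2*t+1) * k * Real.pi / n + 2 * s * k * Real.pi / n := by ring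
  push_cast
  rw [h1, h2, Real.cos_sub, Real.cos_add, Real.sin_sub, Real.sin_add]
  ring

lemma val_add_modeq (n : ℕ) [NeZero n] (p q : Fin n) :
    (((p+q).val : ℤ)) ≡ (p.val:ℤ) + q.val [ZMOD n] := by
  have h : (p + q).val = (p.val + q.val) % n := Fin.val_add p q
  rw [h]
  push_cast [Int.natCast_emod]
  exact Int.emod_emod_of_dvd _ (dvd_refl _)

lemma val_sub_modeq (n : ℕ) [NeZero n] (p q : Fin n) :
    (((p-q).val : ℤ)) ≡ (p.val:ℤ) - q.val [ZMOD n] := by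
  have h : (p - q).val = (n - q.val + p.val) % n := by rw [Fin.sub_def]
  rw [h]
  push_cast [Int.natCast_emod, Nat.cast_sub q.isLt.le]
  refine (Int.emod_emod_of_dvd _ (dvd_refl _)).trans ?_
  exact (Int.modEq_iff_dvd).mpr ⟨-1, by ring⟩

lemma hartley_apply (n : ℕ) (j k : Fin n) :
    hartley n j k = g n k.val (j.val : ℤ) := by
  unfold hartley g
  have : ((2*((j.val:ℤ):ℝ)+1) * (k.val:ℝ) * Real.pi / n)
      = 2 * ((j.val : ℝ) + 1/2) * (k.val : ℝ) * Real.pi / n := by push_cast; ring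
  rw [this]

lemma sum_exp (n : ℕ) [NeZero n] (m : ℤ) (h : ¬ (n:ℤ) ∣ m) :
    ∑ j : Fin n, Complex.exp ((((2*(j:ℕ)+1) * m : ℤ) : ℂ) * Real.pi * Complex.I / n) = 0 := by
  have hn : (n:ℂ) ≠ 0 := Nat.cast_ne_zero.mpr (NeZero.ne n)
  set z : ℂ := Complex.exp (((m:ℂ) * (2 * Real.pi * Complex.I)) / n) with hz
  have hzj : ∀ j : ℕ, Complex.exp ((((2*j+1) * m : ℤ) : ℂ) * Real.pi * Complex.I / n)
      = Complex.exp (((m:ℂ) * Real.pi * Complex.I) / n) * z ^ j := by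
    intro j
    rw [hz, ← Complex.exp_nat_mul, ← Complex.exp_add]
    congr 1
    push_cast
    field_simp
    ring
  have hz1 : z ≠ 1 := by
    intro hz1
    rw [hz, Complex.exp_eq_one_iff] at hz1
    obtain ⟨q, hq⟩ := hz1
    apply h
    refine ⟨q, ?_⟩
    have h2 : (2 * (Real.pi:ℂ) * Complex.I : ℂ) ≠ 0 := by
      simp [Real.pi_ne_zero, Complex.I_ne_zero]
    have h3 : (m : ℂ) * (2 * Real.pi * Complex.I)
        = (((n * q : ℤ)):ℂ) * (2 * Real.pi * Complex.I) := by
      push_cast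
      field_simp at hq
      linear_combination hq * (2 * Real.pi * Complex.I)
    have h4 : (m : ℂ) = ((n * q : ℤ) : ℂ) := mul_right_cancel₀ h2 h3
    exact_mod_cast h4
  have hzn : z ^ n = 1 := by
    rw [hz, ← Complex.exp_nat_mul]
    have : (n:ℂ) * ((m:ℂ) * (2 * Real.pi * Complex.I) / n)
        = (m:ℂ) * (2 * Real.pi * Complex.I) := by field_simp
    rw [this, Complex.exp_int_mul_two_pi_mul_I]
  calc ∑ j : Fin n, Complex.exp ((((2*(j:ℕ)+1) * m : ℤ) : ℂ) * Real.pi * Complex.I / n)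
      = Complex.exp (((m:ℂ) * Real.pi * Complex.I) / n) * ∑ j ∈ Finset.range n, z ^ j := by
        rw [Finset.mul_sum, ← Fin.sum_univ_eq_sum_range]
        exact Finset.sum_congr rfl fun j _ => hzj j
    _ = 0 := by rw [geom_sum_eq hz1, hzn]; simp

lemma arg_eq (n : ℕ) (m : ℤ) (j : ℕ) :
    (((2*j+1) * m : ℤ) : ℂ) * Real.pi * Complex.I / n
      = (((((2*j+1) * m : ℤ) : ℝ) * Real.pi / n : ℝ) : ℂ) * Complex.I := by
  push_cast; ring

lemma sum_cos_zero (n : ℕ) [NeZero n] (m : ℤ) (h : ¬ (n:ℤ) ∣ m) :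
    ∑ j : Fin n, Real.cos ((((2*(j:ℕ)+1) * m : ℤ) : ℝ) * Real.pi / n) = 0 := by
  have hs := congrArg Complex.re (sum_exp n m h)
  rw [Complex.re_sum] at hs
  simp only [arg_eq, Complex.exp_ofReal_mul_I_re, Complex.zero_re] at hs
  exact hs

lemma sum_sin_zero (n : ℕ) [NeZero n] (m : ℤ) :
    ∑ j : Fin n, Real.sin ((((2*(j:ℕ)+1) * m : ℤ) : ℝ) * Real.pi / n) = 0 := by
  by_cases hd : (n:ℤ) ∣ m
  · obtain ⟨q, hq⟩ := hd
    refine Finset.sum_eq_zero fun j _ => ?_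
    have hn : (n:ℝ) ≠ 0 := Nat.cast_ne_zero.mpr (NeZero.ne n)
    have : ((((2*(j:ℕ)+1) * m : ℤ) : ℝ) * Real.pi / n)
        = (((2*(j:ℕ)+1) * q : ℤ) : ℝ) * Real.pi := by
      subst hq; push_cast; field_simp
    rw [this, Real.sin_int_mul_pi]
  · have hs := congrArg Complex.im (sum_exp n m hd)
    rw [Complex.im_sum] at hs
    simp only [arg_eq, Complex.exp_ofReal_mul_I_im, Complex.zero_im] at hs
    exact hs

lemma orth (n : ℕ) [NeZero n] (k l : Fin n) :
    ∑ j : Fin n, hartley n j k * hartley n j l = if k = l then (n:ℝ) else 0 := by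
  have hterm : ∀ j : Fin n, hartley n j k * hartley n j l =
      Real.cos ((((2*(j:ℕ)+1) * ((k.val:ℤ) - (l.val:ℤ)) : ℤ) : ℝ) * Real.pi / n)
      + Real.sin ((((2*(j:ℕ)+1) * ((k.val:ℤ) + (l.val:ℤ)) : ℤ) : ℝ) * Real.pi / n) := by
    intro j
    unfold hartley
    have hd : ((((2*(j:ℕ)+1) * ((k.val:ℤ) - (l.val:ℤ)) : ℤ) : ℝ) * Real.pi / n)
        = 2 * ((j.val : ℝ) + 1/2) * (k.val : ℝ) * Real.pi / n
          - 2 * ((j.val : ℝ) + 1/2) * (l.val : ℝ) * Real.pi / n := by push_cast; ring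
    have hs : ((((2*(j:ℕ)+1) * ((k.val:ℤ) + (l.val:ℤ)) : ℤ) : ℝ) * Real.pi / n)
        = 2 * ((j.val : ℝ) + 1/2) * (k.val : ℝ) * Real.pi / n
          + 2 * ((j.val : ℝ) + 1/2) * (l.val : ℝ) * Real.pi / n := by push_cast; ring
    rw [hd, hs, Real.cos_sub, Real.sin_add]
    ring
  rw [Finset.sum_congr rfl (fun j _ => hterm j), Finset.sum_add_distrib,
    sum_sin_zero n ((k.val:ℤ) + l.val), add_zero]
  by_cases hkl : k = l
  · subst hkl
    simp
  · have hne : (k.val : ℤ) - l.val ≠ 0 := by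
      intro h0
      apply hkl
      exact Fin.ext (by omega)
    have hdvd : ¬ (n:ℤ) ∣ ((k.val:ℤ) - l.val) := by
      intro hdv
      have h1 : (0:ℤ) < |(k.val:ℤ) - l.val| := abs_pos.mpr hne
      have h2 : (n:ℤ) ≤ |(k.val:ℤ) - l.val| :=
        Int.le_of_dvd h1 ((dvd_abs _ _).mpr hdv)
      have hk := k.isLt
      have hl := l.isLt
      have h3 : |(k.val:ℤ) - l.val| < n := abs_lt.mpr ⟨by omega, by omega⟩
      exact absurd h2 (not_le.mpr h3)
    rw [sum_cos_zero n _ hdvd, if_neg hkl]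

lemma eigen (n : ℕ) [NeZero n] (a : Fin n → ℝ) (A : Matrix (Fin n) (Fin n) ℝ)
    (hA : ∀ j k : Fin n, A j k = a (j - k)) (ha : ∀ i : Fin n, a (-i) = a i)
    (j k : Fin n) : (A * hartley n) j k = lam n a k * hartley n j k := by
  have S1 : ∑ m : Fin n, A j m * hartley n m k
      = ∑ m : Fin n, a m * hartley n (j - m) k := by
    simp_rw [hA]
    refine (Fintype.sum_equiv (Equiv.subLeft j)
      (fun m => a m * hartley n (j - m) k)
      (fun m => a (j - m) * hartley n m k) (fun m => ?_)).symm
    simp [Equiv.subLeft, sub_sub_cancel]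
  have S2 : ∑ m : Fin n, a m * hartley n (j - m) k
      = ∑ m : Fin n, a m * hartley n (j + m) k := by
    refine (Fintype.sum_equiv (Equiv.neg (Fin n))
      (fun m => a m * hartley n (j + m) k)
      (fun m => a m * hartley n (j - m) k) (fun m => ?_)).symm
    simp only [Equiv.neg_apply, ha, sub_neg_eq_add]
  have hpair : ∀ m : Fin n, hartley n (j - m) k + hartley n (j + m) k
      = 2 * Real.cos (2 * ((m.val:ℤ):ℝ) * (k.val:ℝ) * Real.pi / n) * hartley n j k := by
    intro m
    rw [hartley_apply, hartley_apply, hartley_apply,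
      g_periodic n k.val (val_sub_modeq n j m),
      g_periodic n k.val (val_add_modeq n j m)]
    exact g_addsub n k.val (j.val:ℤ) (m.val:ℤ)
  have h2 : (2:ℝ) * ((A * hartley n) j k)
      = 2 * (lam n a k * hartley n j k) := by
    rw [Matrix.mul_apply]
    calc (2:ℝ) * ∑ m : Fin n, A j m * hartley n m k
        = ∑ m : Fin n, a m * hartley n (j - m) k
          + ∑ m : Fin n, a m * hartley n (j + m) k := by
          rw [S1, S2]; ring
      _ = ∑ m : Fin n, a m * (hartley n (j - m) k + hartley n (j + m) k) := by
          rw [← Finset.sum_add_distrib]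
          exact Finset.sum_congr rfl fun m _ => by ring
      _ = ∑ m : Fin n, a m
            * (2 * Real.cos (2 * ((m.val:ℤ):ℝ) * (k.val:ℝ) * Real.pi / n) * hartley n j k) := by
          exact Finset.sum_congr rfl fun m _ => by rw [hpair]
      _ = 2 * (lam n a k * hartley n j k) := by
          rw [lam, Finset.sum_mul, Finset.mul_sum]
          exact Finset.sum_congr rfl fun m _ => by ring
  linarith

end SCDH

open SCDH
/-- For a symmetric circulant `A` with first column `a`, the cell-centered
Hartley matrix diagonalizes `A`: `H(n)ᵀ·A·H(n) = n·Λ` with `Λ = √n·Diag(Ȟ_c·a)`. -/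
theorem symm_circulant_diag_cell_hartley (n : ℕ) [NeZero n] (a : Fin n → ℝ)
    (A : Matrix (Fin n) (Fin n) ℝ)
    (hA : ∀ j k : Fin n, A j k = a (j - k))
    (ha : ∀ i : Fin n, a (-i) = a i) :
    (hartley n)ᵀ * A * hartley n =
      (n : ℝ) • (Real.sqrt n • Matrix.diagonal ((Hc n).mulVec a)) := by
  have hn : (0:ℝ) < n := by
    have := Nat.pos_of_ne_zero (NeZero.ne n)
    exact_mod_cast this
  have hsq : Real.sqrt n ≠ 0 := ne_of_gt (Real.sqrt_pos.mpr hn)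
  ext k l
  rw [Matrix.mul_assoc, Matrix.mul_apply]
  have hL : ∑ j : Fin n, (hartley n)ᵀ k j * (A * hartley n) j l
      = lam n a l * ∑ j : Fin n, hartley n j k * hartley n j l := by
    rw [Finset.mul_sum]
    refine Finset.sum_congr rfl fun j _ => ?_
    rw [Matrix.transpose_apply, eigen n a A hA ha j l]
    ring
  rw [hL, orth n k l]
  simp only [Matrix.smul_apply, Matrix.diagonal_apply, smul_eq_mul]
  by_cases hkl : k = l
  · subst hkl
    rw [if_pos rfl, if_pos rfl]
    rw [Matrix.mulVec, dotProduct, lam,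
        Finset.mul_sum, Finset.mul_sum, Finset.sum_mul]
    refine Finset.sum_congr rfl fun m _ => ?_
    simp only [Hc]
    have harg : (2 * ((m.val:ℤ):ℝ) * (k.val:ℝ) * Real.pi / n)
        = (2 * (k.val:ℝ) * (m.val:ℝ) * Real.pi / n) := by push_cast; ring
    rw [harg]
    field_simp
  · rw [if_neg hkl, if_neg hkl]
    ring
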